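/- Let k, n, m, f, d₁, d₂ be natural numbers with k ∈ {3, 4, 5}, n ≥ 4, d₁ ≥ 3, d₂ ≥ 3, and suppose k·n = 2·m, f − 1 = m − n + 1, and 2·m = d₁·(f − 1) + d₂. Then d₁·(k − 2) < 2·k; consequently, if k = 3 then 3 ≤ d₁ ≤ 5, and if k ∈ {4, 5} then d₁ = 3. -/
import Mathlib

/-- Counting core of Lemma 2.9: for a `(k; d₁^{f−1} d₂^1)`-graph with
`k ∈ {3, 4, 5}`, one gets `d₁(k − 2) < 2k`; hence if `k = 3` then
`3 ≤ d₁ ≤ 5`, and if `k ∈ {4, 5}` then `d₁ = 3`. -/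
theorem stmt_6 (k n m f d₁ d₂ : ℕ)
    (hk : k = 3 ∨ k = 4 ∨ k = 5) (hn : 4 ≤ n) (hd₁ : 3 ≤ d₁) (hd₂ : 3 ≤ d₂)
    (h1 : (k : ℤ) * n = 2 * (m : ℤ))
    (h2 : (f : ℤ) - 1 = (m : ℤ) - (n : ℤ) + 1)
    (h3 : 2 * (m : ℤ) = (d₁ : ℤ) * ((f : ℤ) - 1) + (d₂ : ℤ)) :
    (d₁ : ℤ) * ((k : ℤ) - 2) < 2 * (k : ℤ) ∧
      (k = 3 → 3 ≤ d₁ ∧ d₁ ≤ 5) ∧ ((k = 4 ∨ k = 5) → d₁ = 3) := by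
  have key : (n : ℤ) * (2 * k - d₁ * (k - 2)) = 2 * d₁ + 2 * d₂ := by
    linear_combination 2 * h3 + 2 * (d₁ : ℤ) * h2 + (2 - (d₁ : ℤ)) * h1
  have hn' : (4 : ℤ) ≤ n := by exact_mod_cast hn
  have hd₁' : (3 : ℤ) ≤ d₁ := by exact_mod_cast hd₁
  have hd₂' : (3 : ℤ) ≤ d₂ := by exact_mod_cast hd₂
  have main : (d₁ : ℤ) * ((k : ℤ) - 2) < 2 * (k : ℤ) := by nlinarith
  refine ⟨main, ?_, ?_⟩
  · rintro rfl
    have : (d₁ : ℤ) < 6 := by push_cast at main ⊢; linarith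
    have : d₁ < 6 := by exact_mod_cast this
    omega
  · rintro (rfl | rfl)
    · have : 2 * (d₁ : ℤ) < 8 := by push_cast at main ⊢; linarith
      have : d₁ < 4 := by exact_mod_cast (by linarith : (d₁ : ℤ) < 4)
      omega
    · have : 3 * (d₁ : ℤ) < 10 := by push_cast at main ⊢; linarith
      have : d₁ ≤ 3 := by exact_mod_cast (by linarith : (d₁ : ℤ) ≤ 3)
      omega
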